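/- Let A be a Banach algebra, B a Banach A-bimodule, and n ≥ 1. If every continuous derivation from A into the (n+2)-th dual B^(n+2) is inner, then every continuous derivation from A into the n-th dual B^(n) is inner. -/

import Mathlib

open ContinuousLinearMap NormedSpace

noncomputable section

/-- The topological dual `E →L[𝕜] 𝕜` (formerly `NormedSpace.Dual` in Mathlib). -/
def Dual (𝕜 : Type) (E : Type) [NontriviallyNormedField 𝕜] [SeminormedAddCommGroup E]
    [NormedSpace 𝕜 E] : Type :=
  E →L[𝕜] 𝕜

instance (𝕜 : Type) (E : Type) [NontriviallyNormedField 𝕜] [SeminormedAddCommGroup E]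
    [NormedSpace 𝕜 E] : SeminormedAddCommGroup (Dual 𝕜 E) :=
  inferInstanceAs (SeminormedAddCommGroup (E →L[𝕜] 𝕜))

instance (𝕜 : Type) (E : Type) [NontriviallyNormedField 𝕜] [NormedAddCommGroup E]
    [NormedSpace 𝕜 E] : NormedAddCommGroup (Dual 𝕜 E) :=
  inferInstanceAs (NormedAddCommGroup (E →L[𝕜] 𝕜))

instance (𝕜 : Type) (E : Type) [NontriviallyNormedField 𝕜] [SeminormedAddCommGroup E]
    [NormedSpace 𝕜 E] : NormedSpace 𝕜 (Dual 𝕜 E) :=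
  inferInstanceAs (NormedSpace 𝕜 (E →L[𝕜] 𝕜))

instance (𝕜 : Type) (E : Type) [NontriviallyNormedField 𝕜] [SeminormedAddCommGroup E]
    [NormedSpace 𝕜 E] : FunLike (Dual 𝕜 E) E 𝕜 :=
  inferInstanceAs (FunLike (E →L[𝕜] 𝕜) E 𝕜)

instance (𝕜 : Type) (E : Type) [NontriviallyNormedField 𝕜] [SeminormedAddCommGroup E]
    [NormedSpace 𝕜 E] : ContinuousLinearMapClass (Dual 𝕜 E) 𝕜 E 𝕜 :=
  inferInstanceAs (ContinuousLinearMapClass (E →L[𝕜] 𝕜) 𝕜 E 𝕜)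

section Defs

variable {X Y Z W : Type} [NormedAddCommGroup X] [NormedSpace ℝ X]
  [NormedAddCommGroup Y] [NormedSpace ℝ Y] [NormedAddCommGroup Z] [NormedSpace ℝ Z]
  [NormedAddCommGroup W] [NormedSpace ℝ W]

/-- The first adjoint `m^*` of a bounded bilinear map `m : X × Y → Z`,
as a map `Z^* × X → Y^*`, `⟨m^*(z',x), y⟩ = ⟨z', m(x,y)⟩`. -/
def adj1 (m : X →L[ℝ] Y →L[ℝ] Z) :
    Dual ℝ Z →L[ℝ] X →L[ℝ] Dual ℝ Y :=
  (((ContinuousLinearMap.compL ℝ X (Y →L[ℝ] Z) (Dual ℝ Y)).flip m).comp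
    (ContinuousLinearMap.compL ℝ Y Z ℝ))

@[simp] lemma adj1_apply (m : X →L[ℝ] Y →L[ℝ] Z) (z' : Dual ℝ Z) (x : X) (y : Y) :
    adj1 m z' x y = z' (m x y) := rfl

/-- The first (left) Arens extension `m^{***} : X^{**} × Y^{**} → Z^{**}` of a
bounded bilinear map `m : X × Y → Z`. -/
def arens (m : X →L[ℝ] Y →L[ℝ] Z) :
    Dual ℝ (Dual ℝ X) →L[ℝ] Dual ℝ (Dual ℝ Y) →L[ℝ] Dual ℝ (Dual ℝ Z) :=
  adj1 (adj1 (adj1 m))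

/-- The adjoint (dual map) of a bounded linear map. -/
def dualMap' (D : X →L[ℝ] Y) : Dual ℝ Y →L[ℝ] Dual ℝ X :=
  (ContinuousLinearMap.compL ℝ X Y ℝ).flip D

@[simp] lemma dualMap'_apply (D : X →L[ℝ] Y) (g : Dual ℝ Y) (x : X) :
    dualMap' D g x = g (D x) := rfl

/-- The second adjoint `D'' : X^{**} → Y^{**}` of a bounded linear map. -/
def bidualMap (D : X →L[ℝ] Y) : Dual ℝ (Dual ℝ X) →L[ℝ] Dual ℝ (Dual ℝ Y) :=
  dualMap' (dualMap' D)

/-- Given an action `t : A × X → X`, the transposed action on the dual `X^*`: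
`(dualAct t) a f = f ∘ (t a)`. -/
def dualAct (t : W →L[ℝ] X →L[ℝ] X) : W →L[ℝ] Dual ℝ X →L[ℝ] Dual ℝ X :=
  ((ContinuousLinearMap.compL ℝ X X ℝ).flip).comp t

@[simp] lemma dualAct_apply (t : W →L[ℝ] X →L[ℝ] X) (a : W) (f : Dual ℝ X) (x : X) :
    dualAct t a f x = f (t a x) := rfl

/-- `D : A → X` is a derivation with respect to the multiplication `mul'` on `A`
and the left action `l` and right action `r` (`r a x` means `x · a`) of `A` on `X`. -/
def IsDer {A' : Type} [NormedAddCommGroup A'] [NormedSpace ℝ A']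
    (mul' : A' →L[ℝ] A' →L[ℝ] A') (l r : A' →L[ℝ] X →L[ℝ] X) (D : A' →L[ℝ] X) : Prop :=
  ∀ a b : A', D (mul' a b) = l a (D b) + r b (D a)

/-- `D : A → X` is an inner derivation: `D a = a·x - x·a` for some `x`. -/
def IsInner {A' : Type} [NormedAddCommGroup A'] [NormedSpace ℝ A']
    (l r : A' →L[ℝ] X →L[ℝ] X) (D : A' →L[ℝ] X) : Prop :=
  ∃ x : X, ∀ a : A', D a = l a x - r a x

/-- The bimodule axioms for actions `l`, `r` of an algebra with multiplication `mul'`. -/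
def IsBimod {A' : Type} [NormedAddCommGroup A'] [NormedSpace ℝ A']
    (mul' : A' →L[ℝ] A' →L[ℝ] A') (l r : A' →L[ℝ] X →L[ℝ] X) : Prop :=
  (∀ a b x, l (mul' a b) x = l a (l b x)) ∧
  (∀ a b x, r (mul' a b) x = r b (r a x)) ∧
  (∀ a b x, l a (r b x) = r b (l a x))

/-- weak*-to-weak* continuity of a map between dual spaces. -/
def WStarCont (f : Dual ℝ X → Dual ℝ Y) : Prop :=
  ∀ y : Y, Continuous fun φ : WeakDual ℝ X => f φ y

end Defs

/-- A packaged Banach `A`-bimodule (used to form iterated duals). -/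
structure ModPk (A : Type) [NormedAddCommGroup A] [NormedSpace ℝ A] : Type 1 where
  X : Type
  [grp : NormedAddCommGroup X]
  [mod : NormedSpace ℝ X]
  l : A →L[ℝ] X →L[ℝ] X
  r : A →L[ℝ] X →L[ℝ] X

attribute [instance] ModPk.grp ModPk.mod

variable {A : Type} [NormedAddCommGroup A] [NormedSpace ℝ A]

/-- The canonical dual of a packaged bimodule. -/
def ModPk.dual (P : ModPk A) : ModPk A :=
  ⟨Dual ℝ P.X, dualAct P.r, dualAct P.l⟩

/-- The `n`-th iterated dual of a packaged bimodule. -/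
def ModPk.iter (P : ModPk A) : ℕ → ModPk A
  | 0 => P
  | n+1 => (P.iter n).dual

/-- A "level": an algebra (given by its bilinear multiplication) together with a bimodule. -/
structure Lvl : Type 1 where
  Alg : Type
  [g1 : NormedAddCommGroup Alg]
  [m1 : NormedSpace ℝ Alg]
  Mod : Type
  [g2 : NormedAddCommGroup Mod]
  [m2 : NormedSpace ℝ Mod]
  mul : Alg →L[ℝ] Alg →L[ℝ] Alg
  l : Alg →L[ℝ] Mod →L[ℝ] Mod
  r : Alg →L[ℝ] Mod →L[ℝ] Mod

attribute [instance] Lvl.g1 Lvl.m1 Lvl.g2 Lvl.m2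

/-- Passing to second duals: `A^{**}` with the first Arens product, acting on `B^{**}`
via the Arens extensions `π_ℓ^{***}` and `π_r^{***}` of the module actions. -/
def Lvl.double (Q : Lvl) : Lvl where
  Alg := Dual ℝ (Dual ℝ Q.Alg)
  Mod := Dual ℝ (Dual ℝ Q.Mod)
  mul := arens Q.mul
  l := arens Q.l
  r := (arens Q.r.flip).flip

/-- Iterated even duals: `Lvl.iter Q n` is the level `(A^{(2n)}, B^{(2n)})`. -/
def Lvl.iter (Q : Lvl) : ℕ → Lvl
  | 0 => Q
  | n+1 => (Q.iter n).double

/-- The canonical embedding `A → A^{(2n)}`. -/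
def Lvl.embA (Q : Lvl) : (n : ℕ) → Q.Alg →L[ℝ] (Q.iter n).Alg
  | 0 => ContinuousLinearMap.id ℝ _
  | n+1 => (inclusionInDoubleDual ℝ ((Q.iter n).Alg)).comp (Q.embA n)

/-- The canonical embedding `B → B^{(2n)}`. -/
def Lvl.embM (Q : Lvl) : (n : ℕ) → Q.Mod →L[ℝ] (Q.iter n).Mod
  | 0 => ContinuousLinearMap.id ℝ _
  | n+1 => (inclusionInDoubleDual ℝ ((Q.iter n).Mod)).comp (Q.embM n)

/-- The left-topological-center condition `Z^ℓ_{A^{(2n+2)}}(B^{(2n+2)}) = B^{(2n+2)}`,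
stated at the double of a level `Q`: for each `b` in the second-dual module, the map
`a ↦ b·a` is weak*-to-weak* continuous. -/
def Lvl.doubleZl (Q : Lvl) : Prop :=
  ∀ b : (Q.double).Mod, WStarCont (X := Dual ℝ Q.Alg) (Y := Dual ℝ Q.Mod)
    (fun a => (Q.double).r a b)

set_option maxHeartbeats 1000000 in
/-- Auxiliary: the reduction from the third dual of a dual module to the dual module. -/
lemma aux_red {A : Type} [NormedAddCommGroup A] [NormedSpace ℝ A]
    (mul' : A →L[ℝ] A →L[ℝ] A) (M : ModPk A)
    (H : ∀ D : A →L[ℝ] (M.dual.dual.dual).X,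
      IsDer mul' (M.dual.dual.dual).l (M.dual.dual.dual).r D →
      IsInner (M.dual.dual.dual).l (M.dual.dual.dual).r D)
    (D : A →L[ℝ] (M.dual).X) (hD : IsDer mul' (M.dual).l (M.dual).r D) :
    IsInner (M.dual).l (M.dual).r D := by
  let i : Dual ℝ M.X →L[ℝ] Dual ℝ (Dual ℝ (Dual ℝ M.X)) :=
    inclusionInDoubleDual ℝ (Dual ℝ M.X)
  let j : M.X →L[ℝ] Dual ℝ (Dual ℝ M.X) := inclusionInDoubleDual ℝ M.X
  let Pr := dualMap' (X := M.X) (Y := Dual ℝ (Dual ℝ M.X)) j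
  -- i is a bimodule map
  have hil : ∀ (a : A) (f : Dual ℝ M.X),
      i ((M.dual).l a f) = (M.dual.dual.dual).l a (i f) := by
    intro a f; exact ContinuousLinearMap.ext fun Φ => rfl
  have hir : ∀ (a : A) (f : Dual ℝ M.X),
      i ((M.dual).r a f) = (M.dual.dual.dual).r a (i f) := by
    intro a f; exact ContinuousLinearMap.ext fun Φ => rfl
  -- Pr is a bimodule map
  have hjl : ∀ (a : A) (x₀ : M.X),
      (M.dual.dual).r a (j x₀) = j (M.r a x₀) := by
    intro a x₀; exact ContinuousLinearMap.ext fun f => rfl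
  have hjr : ∀ (a : A) (x₀ : M.X),
      (M.dual.dual).l a (j x₀) = j (M.l a x₀) := by
    intro a x₀; exact ContinuousLinearMap.ext fun f => rfl
  have hPl : ∀ (a : A) (Ψ : Dual ℝ (Dual ℝ (Dual ℝ M.X))),
      Pr ((M.dual.dual.dual).l a Ψ) = (M.dual).l a (Pr Ψ) := by
    intro a Ψ; refine ContinuousLinearMap.ext fun x₀ => ?_
    show Ψ ((M.dual.dual).r a (j x₀)) = Ψ (j (M.r a x₀))
    rw [hjl]
  have hPr : ∀ (a : A) (Ψ : Dual ℝ (Dual ℝ (Dual ℝ M.X))),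
      Pr ((M.dual.dual.dual).r a Ψ) = (M.dual).r a (Pr Ψ) := by
    intro a Ψ; refine ContinuousLinearMap.ext fun x₀ => ?_
    show Ψ ((M.dual.dual).l a (j x₀)) = Ψ (j (M.l a x₀))
    rw [hjr]
  have hPi : ∀ f : Dual ℝ M.X, Pr (i f) = f := by
    intro f; exact ContinuousLinearMap.ext fun x₀ => rfl
  obtain ⟨x, hx⟩ := H (i.comp D) (by
    intro a b
    show i (D (mul' a b)) = _
    rw [hD a b]; exact (i.map_add (_ : Dual ℝ M.X) _).trans (congrArg₂ (· + ·) (hil a (D b)) (hir b (D a))))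
  refine ⟨Pr x, fun a => ?_⟩
  have h2 := congrArg Pr (hx a)
  rw [show Pr ((M.dual.dual.dual).l a x - (M.dual.dual.dual).r a x) = Pr ((M.dual.dual.dual).l a x) - Pr ((M.dual.dual.dual).r a x) from Pr.map_sub _ _] at h2
  exact (hPi (D a)).symm.trans (h2.trans (congrArg₂ (· - ·) (hPl a x) (hPr a x)))

/-- **Theorem 2-1.** Let `B` be a Banach `A`-bimodule and `n ≥ 1`. If
`H¹(A, B⁽ⁿ⁺²⁾) = 0` then `H¹(A, B⁽ⁿ⁾) = 0`. -/
theorem stmt0 (A : Type) [NormedRing A] [NormedAlgebra ℝ A] [CompleteSpace A]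
    (B : Type) [NormedAddCommGroup B] [NormedSpace ℝ B] [CompleteSpace B]
    (l r : A →L[ℝ] B →L[ℝ] B)
    (hbim : IsBimod (ContinuousLinearMap.mul ℝ A) l r)
    (n : ℕ) (hn : 1 ≤ n)
    (H : ∀ D : A →L[ℝ] ((ModPk.mk B l r).iter (n+2)).X,
      IsDer (ContinuousLinearMap.mul ℝ A) ((ModPk.mk B l r).iter (n+2)).l
        ((ModPk.mk B l r).iter (n+2)).r D →
      IsInner ((ModPk.mk B l r).iter (n+2)).l ((ModPk.mk B l r).iter (n+2)).r D) :
    ∀ D : A →L[ℝ] ((ModPk.mk B l r).iter n).X,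
      IsDer (ContinuousLinearMap.mul ℝ A) ((ModPk.mk B l r).iter n).l
        ((ModPk.mk B l r).iter n).r D →
      IsInner ((ModPk.mk B l r).iter n).l ((ModPk.mk B l r).iter n).r D := by
  obtain ⟨m, rfl⟩ : ∃ m, n = m + 1 := ⟨n - 1, (Nat.succ_pred_eq_of_pos hn).symm⟩
  intro D hD
  exact aux_red (ContinuousLinearMap.mul ℝ A) ((ModPk.mk B l r).iter m) H D hD
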